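/- arXiv:1912.00723 — 5 statements merged into one kernel-verified Lean document; each statement's English description precedes it below -/
import Mathlib

section
/- In the IRL1 setting, for every k ∈ ℕ, F(x^k, ε^k) − F(x^{k+1}, ε^{k+1}) ≥ [G(x^k; x^k, ε^k) − G(x^{k+1}; x^k, ε^k)] + ((M − L_f)/2)·‖x^k − x^{k+1}‖². -/
open Filter Topology

/-- The weight function `w(t, s) = p(|t| + s)^(p-1)`. -/
noncomputable def wfun (p t s : ℝ) : ℝ := p * (|t| + s) ^ (p - 1)

/-- The IRL1 setting (Algorithm 2.1 of the paper): fixed data `p ∈ (0,1)`, `λ > 0`,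
`μ ∈ (0,1)`, a differentiable `f` with `Lf`-Lipschitz gradient (`Lf ≥ 0`), iterates
`x^k`, positive parameters `ε^k` with `ε^{k+1} ≤ μ ε^k` componentwise, and for each `k`
a differentiable model `Q_k` with `∇Q_k(x^k) = ∇f(x^k)`, `M`-strongly convex with
`M > Lf/2` (strong convexity meaning `z ↦ Q_k z - (M/2)‖z‖²` is convex), `∇Q_k`
`L`-Lipschitz, such that `x^{k+1}` is a global minimizer of
`G(·; x^k, ε^k) = Q_k(·) + λ Σᵢ w(xᵢ^k, εᵢ^k)|·ᵢ|`. -/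
structure IRL1 (n : ℕ) where
  p : ℝ
  lam : ℝ
  mu : ℝ
  Lf : ℝ
  M : ℝ
  L : ℝ
  f : EuclideanSpace ℝ (Fin n) → ℝ
  x : ℕ → EuclideanSpace ℝ (Fin n)
  eps : ℕ → Fin n → ℝ
  Q : ℕ → EuclideanSpace ℝ (Fin n) → ℝ
  hp0 : 0 < p
  hp1 : p < 1
  hlam : 0 < lam
  hmu0 : 0 < mu
  hmu1 : mu < 1
  hLf : 0 ≤ Lf
  hM : Lf / 2 < M
  hf_diff : Differentiable ℝ f
  hf_lip : ∀ a b, ‖gradient f a - gradient f b‖ ≤ Lf * ‖a - b‖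
  heps_pos : ∀ k i, 0 < eps k i
  heps_dec : ∀ k i, eps (k + 1) i ≤ mu * eps k i
  hQ_diff : ∀ k, Differentiable ℝ (Q k)
  hQ_grad : ∀ k, gradient (Q k) (x k) = gradient f (x k)
  hQ_sconv : ∀ k, ConvexOn ℝ Set.univ (fun z => Q k z - M / 2 * ‖z‖ ^ 2)
  hQ_lip : ∀ k a b, ‖gradient (Q k) a - gradient (Q k) b‖ ≤ L * ‖a - b‖
  hmin : ∀ k, ∀ z : EuclideanSpace ℝ (Fin n),
    Q k (x (k + 1)) + lam * ∑ i, wfun p (x k i) (eps k i) * |x (k + 1) i|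
      ≤ Q k z + lam * ∑ i, wfun p (x k i) (eps k i) * |z i|

/-- The smoothed objective `F(x, ε) = f(x) + λ Σᵢ (|xᵢ| + εᵢ)^p`. -/
noncomputable def IRL1.Feps {n : ℕ} (S : IRL1 n)
    (z : EuclideanSpace ℝ (Fin n)) (e : Fin n → ℝ) : ℝ :=
  S.f z + S.lam * ∑ i, (|z i| + e i) ^ S.p

/-- The objective `F(x) = f(x) + λ Σᵢ |xᵢ|^p`. -/
noncomputable def IRL1.Fobj {n : ℕ} (S : IRL1 n) (z : EuclideanSpace ℝ (Fin n)) : ℝ :=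
  S.f z + S.lam * ∑ i, |z i| ^ S.p

/-- The subproblem objective `G(z; x^k, ε^k)`. -/
noncomputable def IRL1.G {n : ℕ} (S : IRL1 n) (k : ℕ)
    (z : EuclideanSpace ℝ (Fin n)) : ℝ :=
  S.Q k z + S.lam * ∑ i, wfun S.p (S.x k i) (S.eps k i) * |z i|

/-- The level set `{x : F(x) ≤ F(x⁰, ε⁰)}` is bounded. -/
def IRL1.LevelBounded {n : ℕ} (S : IRL1 n) : Prop :=
  Bornology.IsBounded {z : EuclideanSpace ℝ (Fin n) | S.Fobj z ≤ S.Feps (S.x 0) (S.eps 0)}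

section Aux

local notation "⟪" x ", " y "⟫" => @inner ℝ _ _ x y

variable {E : Type*} [NormedAddCommGroup E] [InnerProductSpace ℝ E] [CompleteSpace E]

lemma aux_grad_fderiv (f : E → ℝ) (x v : E) :
    fderiv ℝ f x v = ⟪gradient f x, v⟫ := by
  rw [← InnerProductSpace.toDual_apply_apply, gradient, LinearIsometryEquiv.apply_symm_apply]

lemma aux_hasDerivAt_line (f : E → ℝ) (hf : Differentiable ℝ f) (x v : E) (t : ℝ) :
    HasDerivAt (fun s : ℝ => f (x + s • v)) ⟪gradient f (x + t • v), v⟫ t := by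
  have hc : HasDerivAt (fun s : ℝ => x + s • v) v t := by
    simpa using ((hasDerivAt_id t).smul_const v).const_add x
  have h := (hf (x + t • v)).hasFDerivAt.comp_hasDerivAt t hc
  rwa [aux_grad_fderiv] at h

/-- Descent lemma for a function with Lipschitz gradient. -/
lemma aux_descent (f : E → ℝ) (Lf : ℝ) (hf : Differentiable ℝ f)
    (hlip : ∀ a b, ‖gradient f a - gradient f b‖ ≤ Lf * ‖a - b‖) (x y : E) :
    f y ≤ f x + ⟪gradient f x, y - x⟫ + Lf / 2 * ‖y - x‖ ^ 2 := by
  set v : E := y - x with hv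
  set c : ℝ := Lf * ‖v‖ ^ 2 with hc
  set ψ : ℝ → ℝ := fun t => c / 2 * t ^ 2 - f (x + t • v) with hψ
  have hd : ∀ t : ℝ, HasDerivAt ψ (c * t - ⟪gradient f (x + t • v), v⟫) t := by
    intro t
    have h1 : HasDerivAt (fun t : ℝ => c / 2 * t ^ 2) (c / 2 * (2 * t ^ 1)) t :=
      (hasDerivAt_pow 2 t).const_mul (c / 2)
    have h2 := h1.sub (aux_hasDerivAt_line f hf x v t)
    exact h2.congr_deriv (by ring)
  have hmono : Monotone fun t : ℝ => c * t - ⟪gradient f (x + t • v), v⟫ := by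
    intro s t hst
    have key : ⟪gradient f (x + t • v), v⟫ - ⟪gradient f (x + s • v), v⟫ ≤ c * (t - s) := by
      have h1 : ⟪gradient f (x + t • v) - gradient f (x + s • v), v⟫
          ≤ ‖gradient f (x + t • v) - gradient f (x + s • v)‖ * ‖v‖ :=
        real_inner_le_norm _ _
      have h2 : ‖gradient f (x + t • v) - gradient f (x + s • v)‖ * ‖v‖
          ≤ (Lf * ‖(x + t • v) - (x + s • v)‖) * ‖v‖ :=
        mul_le_mul_of_nonneg_right (hlip _ _) (norm_nonneg v)
      have h3 : ‖(x + t • v) - (x + s • v)‖ = (t - s) * ‖v‖ := by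
        rw [show (x + t • v) - (x + s • v) = (t - s) • v by module, norm_smul,
          Real.norm_eq_abs, abs_of_nonneg (by linarith)]
      rw [inner_sub_left] at h1
      rw [h3] at h2
      have : (Lf * ((t - s) * ‖v‖)) * ‖v‖ = c * (t - s) := by rw [hc]; ring
      linarith
    simp only
    linarith
  have hψdiff : Differentiable ℝ ψ := fun t => (hd t).differentiableAt
  have hderiv : deriv ψ = fun t : ℝ => c * t - ⟪gradient f (x + t • v), v⟫ :=
    funext fun t => (hd t).deriv
  have hconv : ConvexOn ℝ Set.univ ψ :=
    Monotone.convexOn_univ_of_deriv hψdiff (hderiv ▸ hmono)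
  have hslope := hconv.le_slope_of_hasDerivAt (Set.mem_univ (0 : ℝ)) (Set.mem_univ (1 : ℝ))
    one_pos (hd 0)
  have hsl : slope ψ 0 1 = ψ 1 - ψ 0 := by simp [slope]
  rw [hsl] at hslope
  have hψ0 : ψ 0 = -f x := by simp [hψ]
  have hψ1 : ψ 1 = c / 2 - f y := by
    simp only [hψ, one_pow, mul_one, one_smul]
    rw [show x + v = y by rw [hv]; abel]
  have hx0 : x + (0 : ℝ) • v = x := by module
  rw [hψ0, hψ1, hx0] at hslope
  have hcv : c / 2 = Lf / 2 * ‖v‖ ^ 2 := by ring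
  rw [hv] at *
  linarith [hslope, hcv]

/-- Lower bound from strong convexity. -/
lemma aux_sconv (Q : E → ℝ) (M : ℝ) (hQ : Differentiable ℝ Q)
    (hconv : ConvexOn ℝ Set.univ (fun z => Q z - M / 2 * ‖z‖ ^ 2)) (x y : E) :
    Q x + ⟪gradient Q x, y - x⟫ + M / 2 * ‖y - x‖ ^ 2 ≤ Q y := by
  set v : E := y - x with hv
  set φ : ℝ → ℝ :=
    fun t => Q (x + t • v) - M / 2 * (‖x‖ ^ 2 + 2 * t * ⟪x, v⟫ + t ^ 2 * ‖v‖ ^ 2) with hφ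
  have hnorm : ∀ t : ℝ, ‖x + t • v‖ ^ 2 = ‖x‖ ^ 2 + 2 * t * ⟪x, v⟫ + t ^ 2 * ‖v‖ ^ 2 := by
    intro t
    rw [← real_inner_self_eq_norm_sq, real_inner_add_add_self, real_inner_smul_right,
      real_inner_smul_left, real_inner_smul_right, real_inner_self_eq_norm_sq,
      real_inner_self_eq_norm_sq]
    ring
  have hφconv : ConvexOn ℝ Set.univ φ := by
    have h := hconv.comp_affineMap (AffineMap.lineMap x y : ℝ →ᵃ[ℝ] E)
    rw [Set.preimage_univ] at h
    have heq : (fun z => Q z - M / 2 * ‖z‖ ^ 2) ∘ (AffineMap.lineMap x y : ℝ →ᵃ[ℝ] E) = φ := by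
      funext t
      simp only [Function.comp_apply, AffineMap.lineMap_apply_module]
      rw [show (1 - t) • x + t • y = x + t • v by rw [hv]; module, hnorm t]
    rwa [heq] at h
  have hd0 : HasDerivAt φ (⟪gradient Q x, v⟫ - M * ⟪x, v⟫) 0 := by
    have h1 := aux_hasDerivAt_line Q hQ x v 0
    rw [show x + (0 : ℝ) • v = x by module] at h1
    have h2a : HasDerivAt (fun t : ℝ => 2 * t * ⟪x, v⟫) (2 * ⟪x, v⟫) 0 := by
      simpa using ((hasDerivAt_id (0 : ℝ)).const_mul 2).mul_const ⟪x, v⟫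
    have h2b : HasDerivAt (fun t : ℝ => t ^ 2 * ‖v‖ ^ 2) 0 0 := by
      simpa using (hasDerivAt_pow 2 (0 : ℝ)).mul_const (‖v‖ ^ 2)
    have h2 : HasDerivAt (fun t : ℝ => M / 2 * (‖x‖ ^ 2 + 2 * t * ⟪x, v⟫ + t ^ 2 * ‖v‖ ^ 2))
        (M / 2 * (2 * ⟪x, v⟫ + 0)) 0 := (((h2a.const_add (‖x‖ ^ 2)).add h2b).const_mul (M / 2))
    have h3 := h1.sub h2
    exact h3.congr_deriv (by ring)
  have hslope := hφconv.le_slope_of_hasDerivAt (Set.mem_univ (0 : ℝ)) (Set.mem_univ (1 : ℝ))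
    one_pos hd0
  have hsl : slope φ 0 1 = φ 1 - φ 0 := by simp [slope]
  rw [hsl] at hslope
  have hφ0 : φ 0 = Q x - M / 2 * ‖x‖ ^ 2 := by
    have hx0 : x + (0 : ℝ) • v = x := by module
    simp [hφ, hx0]
  have hφ1 : φ 1 = Q y - M / 2 * (‖x‖ ^ 2 + 2 * ⟪x, v⟫ + ‖v‖ ^ 2) := by
    have hx1 : x + (1 : ℝ) • v = y := by rw [hv]; module
    simp only [hφ, hx1, one_pow, mul_one, one_mul]
  rw [hφ0, hφ1] at hslope
  have hexp : M / 2 * (‖x‖ ^ 2 + 2 * ⟪x, v⟫ + ‖v‖ ^ 2)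
      = M / 2 * ‖x‖ ^ 2 + M * ⟪x, v⟫ + M / 2 * ‖v‖ ^ 2 := by ring
  rw [hv] at *
  linarith [hslope, hexp]

/-- Concavity inequality for `t ↦ t^p`, `0 < p < 1`. -/
lemma aux_rpow_concave {p a b : ℝ} (hp0 : 0 < p) (hp1 : p < 1) (ha : 0 < a) (hb : 0 ≤ b) :
    b ^ p ≤ a ^ p + p * a ^ (p - 1) * (b - a) := by
  have hs : (-1 : ℝ) ≤ b / a - 1 := by
    have : 0 ≤ b / a := div_nonneg hb ha.le
    linarith
  have h := rpow_one_add_le_one_add_mul_self hs hp0.le hp1.le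
  rw [show (1 : ℝ) + (b / a - 1) = b / a by ring, Real.div_rpow hb ha.le] at h
  have hap : (0 : ℝ) < a ^ p := Real.rpow_pos_of_pos ha p
  have h2 := mul_le_mul_of_nonneg_right h hap.le
  rw [div_mul_cancel₀ _ (ne_of_gt hap)] at h2
  have hkey : (1 + p * (b / a - 1)) * a ^ p = a ^ p + p * a ^ (p - 1) * (b - a) := by
    have hsub : a ^ (p - 1) = a ^ p / a := Real.rpow_sub_one (ne_of_gt ha) p
    rw [hsub]
    field_simp
  rw [hkey] at h2
  exact h2

end Aux

/-- In the IRL1 setting, for every `k`,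
`F(x^k, ε^k) - F(x^{k+1}, ε^{k+1}) ≥ [G(x^k; x^k, ε^k) - G(x^{k+1}; x^k, ε^k)] + ((M - Lf)/2)‖x^k - x^{k+1}‖²`. -/
theorem stmt3 {n : ℕ} (S : IRL1 n) (k : ℕ) :
    S.Feps (S.x k) (S.eps k) - S.Feps (S.x (k + 1)) (S.eps (k + 1)) ≥
      (S.G k (S.x k) - S.G k (S.x (k + 1))) +
        (S.M - S.Lf) / 2 * ‖S.x k - S.x (k + 1)‖ ^ 2 := by
  classical
  set x := S.x k with hxdef
  set y := S.x (k + 1) with hydef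
  -- Part 1: smooth part comparison
  have hdesc := aux_descent S.f S.Lf S.hf_diff S.hf_lip x y
  have hsc := aux_sconv (S.Q k) S.M (S.hQ_diff k) (S.hQ_sconv k) x y
  rw [S.hQ_grad k] at hsc
  have hN : ‖x - y‖ ^ 2 = ‖y - x‖ ^ 2 := by rw [norm_sub_rev]
  have hpart1 : S.Q k x - S.Q k y + (S.M - S.Lf) / 2 * ‖x - y‖ ^ 2 ≤ S.f x - S.f y := by
    rw [hN]
    nlinarith [hdesc, hsc]
  -- Part 2: nonsmooth part comparison, pointwise
  have hsum : ∀ i, wfun S.p (x i) (S.eps k i) * (|x i| - |y i|)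
      ≤ (|x i| + S.eps k i) ^ S.p - (|y i| + S.eps (k + 1) i) ^ S.p := by
    intro i
    have hea : 0 < S.eps k i := S.heps_pos k i
    have heb : 0 < S.eps (k + 1) i := S.heps_pos (k + 1) i
    have ha : 0 < |x i| + S.eps k i := add_pos_of_nonneg_of_pos (abs_nonneg _) hea
    have hb : 0 ≤ |y i| + S.eps k i := add_nonneg (abs_nonneg _) hea.le
    have hle : |y i| + S.eps (k + 1) i ≤ |y i| + S.eps k i := by
      have h1 := S.heps_dec k i
      nlinarith [S.hmu1, hea]
    have h1 : (|y i| + S.eps (k + 1) i) ^ S.p ≤ (|y i| + S.eps k i) ^ S.p :=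
      Real.rpow_le_rpow (add_nonneg (abs_nonneg _) heb.le) hle S.hp0.le
    have h2 := aux_rpow_concave S.hp0 S.hp1 ha hb
    have hba : (|y i| + S.eps k i) - (|x i| + S.eps k i) = |y i| - |x i| := by ring
    rw [hba] at h2
    simp only [wfun]
    nlinarith [h1, h2]
  have hs : ∑ i, wfun S.p (x i) (S.eps k i) * (|x i| - |y i|)
      ≤ ∑ i, ((|x i| + S.eps k i) ^ S.p - (|y i| + S.eps (k + 1) i) ^ S.p) :=
    Finset.sum_le_sum fun i _ => hsum i
  rw [Finset.sum_sub_distrib] at hs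
  have hwsum : ∑ i, wfun S.p (x i) (S.eps k i) * (|x i| - |y i|)
      = ∑ i, wfun S.p (x i) (S.eps k i) * |x i| - ∑ i, wfun S.p (x i) (S.eps k i) * |y i| := by
    rw [← Finset.sum_sub_distrib]
    exact Finset.sum_congr rfl fun i _ => by ring
  rw [hwsum] at hs
  have hlam := mul_le_mul_of_nonneg_left hs S.hlam.le
  simp only [IRL1.Feps, IRL1.G, ge_iff_le]
  nlinarith [hpart1, hlam]
end

section
/- In the IRL1 setting, for every k ∈ ℕ, F(x^k, ε^k) − F(x^{k+1}, ε^{k+1}) ≥ F(x^k, ε^k) − F(x^{k+1}, ε^k) ≥ (M − L_f/2)·‖x^k − x^{k+1}‖²; in particular the values F(x^k, ε^k) are monotonically nonincreasing in k. -/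
open Filter Topology

section Helpers
open Set


lemma limIoo_le {c C : ℝ} (h : ∀ t ∈ Set.Ioo (0:ℝ) 1, (1 - t) * c ≤ C) : c ≤ C := by
  have ht : Tendsto (fun t : ℝ => (1 - t) * c) (𝓝[>] (0:ℝ)) (𝓝 c) := by
    have : Tendsto (fun t : ℝ => (1 - t) * c) (𝓝 (0:ℝ)) (𝓝 ((1 - 0) * c)) :=
      (((continuous_const.sub continuous_id).mul continuous_const).tendsto 0)
    simpa using this.mono_left nhdsWithin_le_nhds
  refine le_of_tendsto ht ?_
  filter_upwards [Ioo_mem_nhdsGT_of_mem (Set.left_mem_Ico.2 one_pos)] with t hth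
  exact h t hth

lemma slope_tendsto {φ : ℝ → ℝ} {d : ℝ} (hφ : HasDerivAt φ d 0) :
    Tendsto (fun t => (φ t - φ 0) / t) (𝓝[>] (0:ℝ)) (𝓝 d) := by
  have := hasDerivAt_iff_tendsto_slope.1 hφ
  have h2 := this.mono_left (nhdsWithin_mono _ (fun t (ht : t ∈ Set.Ioi (0:ℝ)) => ne_of_gt ht))
  have heq : (fun t : ℝ => (φ t - φ 0) / t) = slope φ 0 := by
    funext t; simp [slope_def_field]
  rw [heq]; exact h2

lemma le_deriv_of_le_slope {φ : ℝ → ℝ} {d c : ℝ} (hφ : HasDerivAt φ d 0)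
    (h : ∀ t ∈ Set.Ioo (0:ℝ) 1, c ≤ (φ t - φ 0) / t) : c ≤ d := by
  refine ge_of_tendsto (slope_tendsto hφ) ?_
  filter_upwards [Ioo_mem_nhdsGT_of_mem (Set.left_mem_Ico.2 one_pos)] with t hth
  exact h t hth

lemma deriv_le_of_slope_le {φ : ℝ → ℝ} {d a b : ℝ} (hφ : HasDerivAt φ d 0)
    (h : ∀ t ∈ Set.Ioo (0:ℝ) 1, (φ t - φ 0) / t ≤ a + t * b) : d ≤ a := by
  have ht : Tendsto (fun t : ℝ => a + t * b) (𝓝[>] (0:ℝ)) (𝓝 a) := by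
    have : Tendsto (fun t : ℝ => a + t * b) (𝓝 (0:ℝ)) (𝓝 (a + 0 * b)) :=
      (continuous_const.add (continuous_id.mul continuous_const)).tendsto 0
    simpa using this.mono_left nhdsWithin_le_nhds
  refine le_of_tendsto_of_tendsto (slope_tendsto hφ) ht ?_
  filter_upwards [Ioo_mem_nhdsGT_of_mem (Set.left_mem_Ico.2 one_pos)] with t hth
  exact h t hth

lemma rpow_tangent {p u v : ℝ} (hp0 : 0 < p) (hp1 : p < 1) (hu : 0 < u) (hv : 0 ≤ v) :
    v ^ p ≤ u ^ p + p * u ^ (p - 1) * (v - u) := by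
  have hline : HasDerivAt (fun t : ℝ => u + t * (v - u)) (v - u) 0 := by
    simpa using ((hasDerivAt_id (0:ℝ)).mul_const (v - u)).const_add u
  have h2 : HasDerivAt (fun x : ℝ => x ^ p) (p * u ^ (p - 1))
      ((fun t : ℝ => u + t * (v - u)) 0) := by
    simpa using Real.hasDerivAt_rpow_const (x := u) (p := p) (Or.inl hu.ne')
  have hd : HasDerivAt (fun t : ℝ => (u + t * (v - u)) ^ p) (p * u ^ (p - 1) * (v - u)) 0 := by
    exact h2.comp (0:ℝ) hline
  have key := le_deriv_of_le_slope (c := v ^ p - u ^ p) hd ?_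
  · linarith
  intro t ht
  have hconc := (Real.concaveOn_rpow hp0.le hp1.le).2 (Set.mem_Ici.2 hu.le) (Set.mem_Ici.2 hv)
    (by linarith [ht.2] : (0:ℝ) ≤ 1 - t) (le_of_lt ht.1) (by ring)
  simp only [zero_mul, add_zero]
  rw [le_div_iff₀ ht.1]
  have heq : (1 - t) • u + t • v = u + t * (v - u) := by simp only [smul_eq_mul]; ring
  rw [heq] at hconc
  simp only [smul_eq_mul] at hconc
  nlinarith [hconc]

variable {n : ℕ}

lemma hasDerivAt_line {f : EuclideanSpace ℝ (Fin n) → ℝ} (hf : Differentiable ℝ f)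
    (x δ : EuclideanSpace ℝ (Fin n)) (t₀ : ℝ) :
    HasDerivAt (fun t : ℝ => f (x + t • δ))
      (inner ℝ (gradient f (x + t₀ • δ)) δ : ℝ) t₀ := by
  have hline : HasDerivAt (fun t : ℝ => x + t • δ) δ t₀ := by
    simpa using ((hasDerivAt_id t₀).smul_const δ).const_add x
  have hF := hasGradientAt_iff_hasFDerivAt.1 ((hf (x + t₀ • δ)).hasGradientAt)
  have := hF.comp_hasDerivAt t₀ hline
  simpa [InnerProductSpace.toDual_apply_apply, Function.comp_def] using this

lemma descent_lemma {f : EuclideanSpace ℝ (Fin n) → ℝ} {Lf : ℝ} (hf : Differentiable ℝ f)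
    (hlip : ∀ a b, ‖gradient f a - gradient f b‖ ≤ Lf * ‖a - b‖)
    (x y : EuclideanSpace ℝ (Fin n)) :
    f y ≤ f x + inner ℝ (gradient f x) (y - x) + Lf / 2 * ‖y - x‖ ^ 2 := by
  set δ := y - x with hδ
  set g : ℝ → ℝ := fun t =>
    f (x + t • δ) - t * inner ℝ (gradient f x) δ - Lf / 2 * t ^ 2 * ‖δ‖ ^ 2 with hg
  have hgd : ∀ t : ℝ, HasDerivAt g
      ((inner ℝ (gradient f (x + t • δ)) δ : ℝ) - inner ℝ (gradient f x) δ - Lf * t * ‖δ‖ ^ 2) t := by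
    intro t
    have h1 := hasDerivAt_line hf x δ t
    have h2 : HasDerivAt (fun s : ℝ => s * (inner ℝ (gradient f x) δ : ℝ))
        (inner ℝ (gradient f x) δ : ℝ) t := by
      simpa using (hasDerivAt_id t).mul_const (inner ℝ (gradient f x) δ : ℝ)
    have h3 : HasDerivAt (fun s : ℝ => Lf / 2 * s ^ 2 * ‖δ‖ ^ 2) (Lf * t * ‖δ‖ ^ 2) t := by
      have := ((hasDerivAt_pow 2 t).const_mul (Lf / 2)).mul_const (‖δ‖ ^ 2)
      convert this using 1
      exacts [rfl, rfl, by rw [show (2:ℕ) - 1 = 1 from rfl]; push_cast; ring]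
    exact (h1.sub h2).sub h3
  have hanti : AntitoneOn g (Set.Icc 0 1) := by
    refine antitoneOn_of_deriv_nonpos (convex_Icc 0 1) ?_ ?_ ?_
    · exact (Differentiable.continuous fun t => (hgd t).differentiableAt).continuousOn
    · intro t _; exact ((hgd t).differentiableAt).differentiableWithinAt
    · intro t ht
      rw [interior_Icc] at ht
      rw [(hgd t).deriv]
      have hti : (0:ℝ) < t := ht.1
      have h1 : (inner ℝ (gradient f (x + t • δ) - gradient f x) δ : ℝ)
          ≤ ‖gradient f (x + t • δ) - gradient f x‖ * ‖δ‖ := real_inner_le_norm _ _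
      have h2 : ‖gradient f (x + t • δ) - gradient f x‖ * ‖δ‖ ≤ (Lf * ‖x + t • δ - x‖) * ‖δ‖ :=
        mul_le_mul_of_nonneg_right (hlip _ _) (norm_nonneg δ)
      have h3 : ‖x + t • δ - x‖ = t * ‖δ‖ := by
        simp [norm_smul, abs_of_pos hti]
      rw [h3] at h2
      rw [inner_sub_left] at h1
      have : (inner ℝ (gradient f (x + t • δ)) δ : ℝ) - inner ℝ (gradient f x) δ
          ≤ Lf * t * ‖δ‖ ^ 2 := by
        calc _ ≤ Lf * (t * ‖δ‖) * ‖δ‖ := le_trans h1 h2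
        _ = Lf * t * ‖δ‖ ^ 2 := by ring
      linarith
  have h01 := hanti (Set.left_mem_Icc.2 zero_le_one) (Set.right_mem_Icc.2 zero_le_one) zero_le_one
  have hg0 : g 0 = f x := by simp [hg]
  have hg1 : g 1 = f y - inner ℝ (gradient f x) δ - Lf / 2 * ‖δ‖ ^ 2 := by
    simp [hg, hδ]
  rw [hg0, hg1] at h01
  have : ‖δ‖ = ‖y - x‖ := by rw [hδ]
  linarith [h01]

end Helpers

/-- In the IRL1 setting, for every `k`,
`F(x^k, ε^k) - F(x^{k+1}, ε^{k+1}) ≥ F(x^k, ε^k) - F(x^{k+1}, ε^k) ≥ (M - Lf/2)‖x^k - x^{k+1}‖²`;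
in particular `F(x^k, ε^k)` is monotonically nonincreasing in `k`. -/
theorem stmt4 {n : ℕ} (S : IRL1 n) :
    (∀ k : ℕ,
      S.Feps (S.x k) (S.eps k) - S.Feps (S.x (k + 1)) (S.eps (k + 1)) ≥
        S.Feps (S.x k) (S.eps k) - S.Feps (S.x (k + 1)) (S.eps k) ∧
      S.Feps (S.x k) (S.eps k) - S.Feps (S.x (k + 1)) (S.eps k) ≥
        (S.M - S.Lf / 2) * ‖S.x k - S.x (k + 1)‖ ^ 2) ∧
    Antitone (fun k => S.Feps (S.x k) (S.eps k)) := by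

  classical
  have hw_nonneg : ∀ k i, 0 ≤ wfun S.p (S.x k i) (S.eps k i) := by
    intro k i
    have h1 : (0:ℝ) ≤ |S.x k i| + S.eps k i :=
      add_nonneg (abs_nonneg _) (S.heps_pos k i).le
    exact mul_nonneg S.hp0.le (Real.rpow_nonneg h1 _)
  have hQs : ∀ k, StrongConvexOn Set.univ S.M (S.Q k) := fun k =>
    strongConvexOn_iff_convex.2 (S.hQ_sconv k)
  have key : ∀ k, S.Feps (S.x (k+1)) (S.eps k) + (S.M - S.Lf / 2) * ‖S.x k - S.x (k+1)‖ ^ 2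
      ≤ S.Feps (S.x k) (S.eps k) := by
    intro k
    have hnorm : ‖S.x (k+1) - S.x k‖ = ‖S.x k - S.x (k+1)‖ := norm_sub_rev _ _
    -- notation
    set x := S.x k with hx
    set y := S.x (k+1) with hy
    set w : Fin n → ℝ := fun i => wfun S.p (S.x k i) (S.eps k i) with hw
    set d : ℝ := inner ℝ (gradient (S.Q k) x) (y - x) with hdd
    -- derivative of Q along the segment
    have hd : HasDerivAt (fun t : ℝ => S.Q k (x + t • (y - x))) d 0 := by
      have := hasDerivAt_line (S.hQ_diff k) x (y - x) 0
      simp only [zero_smul, add_zero] at this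
      exact this
    -- (a) strong convexity lower bound
    have ha : d ≤ S.Q k y - S.Q k x - S.M / 2 * ‖x - y‖ ^ 2 := by
      refine deriv_le_of_slope_le (b := S.M / 2 * ‖x - y‖ ^ 2) hd ?_
      intro t ht
      have hstrong := (hQs k).2 (Set.mem_univ x) (Set.mem_univ y)
        (show (0:ℝ) ≤ 1 - t by linarith [ht.2]) ht.1.le (show (1 - t) + t = 1 by ring)
      have hpt : (1 - t) • x + t • y = x + t • (y - x) := by
        rw [sub_smul, one_smul, smul_sub]; abel
      rw [hpt] at hstrong
      simp only [smul_eq_mul] at hstrong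
      rw [div_le_iff₀ ht.1]
      simp only [zero_smul, add_zero]
      nlinarith [hstrong]
    -- (b) descent lemma
    have hb : S.f y ≤ S.f x + d + S.Lf / 2 * ‖x - y‖ ^ 2 := by
      have := descent_lemma S.hf_diff S.hf_lip x y
      rw [norm_sub_rev y x] at this
      rw [hdd, S.hQ_grad k]
      exact this
    -- (c) quadratic growth at the minimizer
    have hc : S.M / 2 * ‖x - y‖ ^ 2 ≤
        (S.Q k x + S.lam * ∑ i, w i * |x i|) - (S.Q k y + S.lam * ∑ i, w i * |y i|) := by
      apply limIoo_le
      intro t ht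
      set z : EuclideanSpace ℝ (Fin n) := (1 - t) • y + t • x with hz
      have hmin' := S.hmin k z
      have hstrong := (hQs k).2 (Set.mem_univ y) (Set.mem_univ x)
        (show (0:ℝ) ≤ 1 - t by linarith [ht.2]) ht.1.le (show (1 - t) + t = 1 by ring)
      simp only [smul_eq_mul] at hstrong
      rw [norm_sub_rev y x] at hstrong
      have habs : ∑ i, w i * |z i| ≤ (1 - t) * ∑ i, w i * |y i| + t * ∑ i, w i * |x i| := by
        have h1 : ∀ i ∈ Finset.univ, w i * |z i| ≤
            (1 - t) * (w i * |y i|) + t * (w i * |x i|) := by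
          intro i _
          have hzi : z i = (1 - t) * y i + t * x i := by
            simp [hz, PiLp.add_apply, PiLp.smul_apply, smul_eq_mul]
          have h2 : |z i| ≤ (1 - t) * |y i| + t * |x i| := by
            rw [hzi]
            calc |((1 - t) * y i + t * x i)| ≤ |(1 - t) * y i| + |t * x i| := abs_add_le _ _
              _ = (1 - t) * |y i| + t * |x i| := by
                  rw [abs_mul, abs_mul, abs_of_nonneg (by linarith [ht.2] : (0:ℝ) ≤ 1 - t),
                    abs_of_nonneg ht.1.le]
          calc w i * |z i| ≤ w i * ((1 - t) * |y i| + t * |x i|) :=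
                mul_le_mul_of_nonneg_left h2 (hw_nonneg k i)
            _ = (1 - t) * (w i * |y i|) + t * (w i * |x i|) := by ring
        calc ∑ i, w i * |z i| ≤ ∑ i, ((1 - t) * (w i * |y i|) + t * (w i * |x i|)) :=
              Finset.sum_le_sum h1
          _ = (1 - t) * ∑ i, w i * |y i| + t * ∑ i, w i * |x i| := by
              rw [Finset.sum_add_distrib, ← Finset.mul_sum, ← Finset.mul_sum]
      have hG : S.Q k y + S.lam * ∑ i, w i * |y i| ≤
          ((1 - t) * S.Q k y + t * S.Q k x - (1 - t) * t * (S.M / 2 * ‖x - y‖ ^ 2)) +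
            S.lam * ((1 - t) * ∑ i, w i * |y i| + t * ∑ i, w i * |x i|) := by
        refine le_trans hmin' ?_
        have hl := mul_le_mul_of_nonneg_left habs S.hlam.le
        have := hstrong
        simp only [← hw] at hmin' ⊢
        linarith [hstrong, hl]
      have h4 : t * ((1 - t) * (S.M / 2 * ‖x - y‖ ^ 2)) ≤
          t * ((S.Q k x + S.lam * ∑ i, w i * |x i|) -
            (S.Q k y + S.lam * ∑ i, w i * |y i|)) := by nlinarith [hG]
      exact (mul_le_mul_iff_of_pos_left ht.1).1 h4
    -- (d) per-coordinate concavity tangent inequality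
    have hdcoord : ∀ i ∈ Finset.univ, (|y i| + S.eps k i) ^ S.p ≤
        (|x i| + S.eps k i) ^ S.p + w i * (|y i| - |x i|) := by
      intro i _
      have hu : (0:ℝ) < |x i| + S.eps k i := by
        have := S.heps_pos k i
        have := abs_nonneg (x i)
        linarith
      have hv : (0:ℝ) ≤ |y i| + S.eps k i := by
        have := S.heps_pos k i
        have := abs_nonneg (y i)
        linarith
      have := rpow_tangent S.hp0 S.hp1 hu hv
      have hvu : |y i| + S.eps k i - (|x i| + S.eps k i) = |y i| - |x i| := by ring
      rw [hvu] at this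
      simpa [hw, wfun, hx] using this
    have hsum : ∑ i, (|y i| + S.eps k i) ^ S.p ≤
        (∑ i, (|x i| + S.eps k i) ^ S.p) +
          ((∑ i, w i * |y i|) - ∑ i, w i * |x i|) := by
      calc ∑ i, (|y i| + S.eps k i) ^ S.p
          ≤ ∑ i, ((|x i| + S.eps k i) ^ S.p + w i * (|y i| - |x i|)) :=
            Finset.sum_le_sum hdcoord
        _ = (∑ i, (|x i| + S.eps k i) ^ S.p) +
            ((∑ i, w i * |y i|) - ∑ i, w i * |x i|) := by
            rw [Finset.sum_add_distrib, ← Finset.sum_sub_distrib]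
            congr 1
            apply Finset.sum_congr rfl
            intro i _
            ring
    have hlsum := mul_le_mul_of_nonneg_left hsum S.hlam.le
    rw [mul_add, mul_sub] at hlsum
    show S.f y + S.lam * ∑ i, (|y i| + S.eps k i) ^ S.p + _ ≤
      S.f x + S.lam * ∑ i, (|x i| + S.eps k i) ^ S.p
    linarith [hb, ha, hc, hlsum]
  have mono_eps : ∀ k, S.Feps (S.x (k+1)) (S.eps (k+1)) ≤ S.Feps (S.x (k+1)) (S.eps k) := by
    intro k
    unfold IRL1.Feps
    have hsum : ∑ i, (|S.x (k+1) i| + S.eps (k+1) i) ^ S.p ≤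
        ∑ i, (|S.x (k+1) i| + S.eps k i) ^ S.p := by
      refine Finset.sum_le_sum fun i _ => ?_
      refine Real.rpow_le_rpow (add_nonneg (abs_nonneg _) (S.heps_pos (k+1) i).le) ?_ S.hp0.le
      have h1 := S.heps_dec k i
      have h2 : S.mu * S.eps k i ≤ S.eps k i := by
        nlinarith [S.heps_pos k i, S.hmu1]
      have : S.eps (k+1) i ≤ S.eps k i := le_trans h1 h2
      linarith
    nlinarith [mul_le_mul_of_nonneg_left hsum S.hlam.le]
  have hnn : ∀ k, 0 ≤ (S.M - S.Lf / 2) * ‖S.x k - S.x (k+1)‖ ^ 2 := fun k =>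
    mul_nonneg (by linarith [S.hM]) (by positivity)
  refine ⟨fun k => ⟨by linarith [mono_eps k], by linarith [key k]⟩, ?_⟩
  refine antitone_nat_of_succ_le fun k => ?_
  calc S.Feps (S.x (k+1)) (S.eps (k+1)) ≤ S.Feps (S.x (k+1)) (S.eps k) := mono_eps k
    _ ≤ S.Feps (S.x k) (S.eps k) := by linarith [key k, hnn k]
end

section
/- In the IRL1 setting, assume additionally that the level set {x : F(x) ≤ F(x^0, ε^0)} is bounded, where F(x) = f(x) + λ Σ_{i=1}^n |x_i|^p. Then for every k ∈ ℕ, F(x^0, ε^0) − F(x^k, ε^k) ≥ (M − L_f/2)·Σ_{t=0}^{k−1} ‖x^{t+1} − x^t‖², the series Σ_{t=0}^∞ ‖x^{t+1} − x^t‖² converges, and ‖x^{k+1} − x^k‖ → 0 as k → ∞. -/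
open Filter Topology

section AuxLemmas

open RealInnerProductSpace

variable {E : Type*} [NormedAddCommGroup E] [InnerProductSpace ℝ E] [CompleteSpace E]

omit [CompleteSpace E] in
lemma irl1_convex_support_line {h : E → ℝ} (hc : ConvexOn ℝ Set.univ h)
    {a : E} (hd : DifferentiableAt ℝ h a) (b : E) :
    h a + fderiv ℝ h a (b - a) ≤ h b := by
  set d := b - a with hdd
  have hg : HasDerivAt (fun s : ℝ => a + s • d) d 0 := by
    simpa using ((hasDerivAt_id (0:ℝ)).smul_const d).const_add a
  have hφ : HasDerivAt (fun s : ℝ => h (a + s • d)) (fderiv ℝ h a d) 0 := by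
    have hd' : HasFDerivAt h (fderiv ℝ h a) (a + (0:ℝ) • d) := by
      simpa using hd.hasFDerivAt
    exact hd'.comp_hasDerivAt 0 hg
  have hT : Tendsto (slope (fun s : ℝ => h (a + s • d)) 0) (𝓝[>] (0:ℝ))
      (𝓝 (fderiv ℝ h a d)) :=
    (hasDerivAt_iff_tendsto_slope.1 hφ).mono_left
      (nhdsWithin_mono 0 (fun t ht => ne_of_gt ht))
  have hev : ∀ᶠ t in 𝓝[>] (0:ℝ),
      slope (fun s : ℝ => h (a + s • d)) 0 t ≤ h b - h a := by
    filter_upwards [Ioc_mem_nhdsGT one_pos] with t ht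
    have hxt : a + t • d = (1 - t) • a + t • b := by
      rw [hdd]; module
    have hcv : h (a + t • d) ≤ (1 - t) * h a + t * h b := by
      rw [hxt]
      exact hc.2 (Set.mem_univ a) (Set.mem_univ b)
        (by linarith [ht.2] : (0:ℝ) ≤ 1 - t) ht.1.le (by ring)
    have ht0 : (0:ℝ) < t := ht.1
    rw [slope_def_field]
    simp only [zero_smul, add_zero, sub_zero]
    rw [div_le_iff₀ ht0]
    nlinarith [hcv]
  linarith [le_of_tendsto hT hev]

lemma irl1_fderiv_eq_inner_gradient {f : E → ℝ} {x : E} (h : DifferentiableAt ℝ f x) (v : E) :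
    fderiv ℝ f x v = ⟪gradient f x, v⟫ := by
  rw [h.hasGradientAt.hasFDerivAt.fderiv]
  exact InnerProductSpace.toDual_apply_apply

omit [CompleteSpace E] in
lemma irl1_quad_growth {φ : E → ℝ} {M : ℝ}
    (hc : ConvexOn ℝ Set.univ (fun z => φ z - M / 2 * ‖z‖ ^ 2))
    {xs : E} (hmin : ∀ z, φ xs ≤ φ z) (z : E) :
    φ xs + M / 2 * ‖z - xs‖ ^ 2 ≤ φ z := by
  set d := z - xs with hdd
  have hA : ‖z‖ ^ 2 = ‖xs‖ ^ 2 + 2 * ⟪xs, d⟫ + ‖d‖ ^ 2 := by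
    have : z = xs + d := by rw [hdd]; abel
    rw [this, norm_add_sq_real]
  have key : ∀ t : ℝ, t ∈ Set.Ioc (0:ℝ) 1 → M / 2 * (1 - t) * ‖d‖ ^ 2 ≤ φ z - φ xs := by
    intro t ht
    have hxt : xs + t • d = (1 - t) • xs + t • z := by rw [hdd]; module
    have hcv : φ (xs + t • d) - M / 2 * ‖xs + t • d‖ ^ 2 ≤
        (1 - t) * (φ xs - M / 2 * ‖xs‖ ^ 2) + t * (φ z - M / 2 * ‖z‖ ^ 2) := by
      rw [hxt]
      exact hc.2 (Set.mem_univ xs) (Set.mem_univ z)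
        (by linarith [ht.2] : (0:ℝ) ≤ 1 - t) ht.1.le (by ring)
    have hB : ‖xs + t • d‖ ^ 2 = ‖xs‖ ^ 2 + 2 * (t * ⟪xs, d⟫) + t ^ 2 * ‖d‖ ^ 2 := by
      rw [norm_add_sq_real, real_inner_smul_right, norm_smul, mul_pow, Real.norm_eq_abs, sq_abs]
    have hm := hmin (xs + t • d)
    have ht0 : (0:ℝ) < t := ht.1
    rw [hB, hA] at hcv
    by_contra hlt
    push_neg at hlt
    have hmul := mul_lt_mul_of_pos_left hlt ht0
    nlinarith [hcv, hm, hmul]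
  have hT : Tendsto (fun t : ℝ => M / 2 * (1 - t) * ‖d‖ ^ 2) (𝓝[>] (0:ℝ))
      (𝓝 (M / 2 * (1 - 0) * ‖d‖ ^ 2)) := by
    apply Tendsto.mono_left _ nhdsWithin_le_nhds
    exact (Continuous.tendsto (by continuity) 0)
  have hev : ∀ᶠ t in 𝓝[>] (0:ℝ), M / 2 * (1 - t) * ‖d‖ ^ 2 ≤ φ z - φ xs := by
    filter_upwards [Ioc_mem_nhdsGT one_pos] with t ht using key t ht
  have := le_of_tendsto hT hev
  simp only [sub_zero, mul_one] at this
  linarith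

lemma irl1_strong_support {Q : E → ℝ} {M : ℝ} (hQd : Differentiable ℝ Q)
    (hc : ConvexOn ℝ Set.univ (fun z => Q z - M / 2 * ‖z‖ ^ 2)) (a b : E) :
    ⟪gradient Q a, b - a⟫ ≤ Q b - Q a - M / 2 * ‖b - a‖ ^ 2 := by
  have hns : Differentiable ℝ (fun z : E => ‖z‖ ^ 2) :=
    (contDiff_norm_sq (𝕜 := ℝ) (E := E) (n := 1)).differentiable one_ne_zero
  have hh : DifferentiableAt ℝ (fun z => Q z - M / 2 * ‖z‖ ^ 2) a :=
    ((hQd a).sub ((hns a).const_mul _))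
  have hfns : fderiv ℝ (fun z : E => ‖z‖ ^ 2) a (b - a) = 2 * ⟪a, b - a⟫ := by
    have heq : (fun z : E => ‖z‖ ^ 2) = fun z : E => ⟪z, z⟫ := by
      funext z; rw [real_inner_self_eq_norm_sq]
    rw [heq]
    rw [fderiv_inner_apply ℝ differentiableAt_fun_id differentiableAt_fun_id]
    simp [real_inner_comm]
    ring
  have hfd : fderiv ℝ (fun z => Q z - M / 2 * ‖z‖ ^ 2) a (b - a)
      = ⟪gradient Q a, b - a⟫ - M * ⟪a, b - a⟫ := by
    rw [fderiv_fun_sub (hQd a) ((hns a).const_mul _)]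
    simp only [ContinuousLinearMap.coe_sub', Pi.sub_apply]
    rw [irl1_fderiv_eq_inner_gradient (hQd a), fderiv_const_mul (hns a)]
    simp only [ContinuousLinearMap.coe_smul', Pi.smul_apply, smul_eq_mul]
    rw [hfns]; ring
  have hsl := irl1_convex_support_line hc hh b
  rw [hfd] at hsl
  have hA : ‖b‖ ^ 2 = ‖a‖ ^ 2 + 2 * ⟪a, b - a⟫ + ‖b - a‖ ^ 2 := by
    have : b = a + (b - a) := by abel
    nth_rewrite 1 [this]
    rw [norm_add_sq_real]
  rw [hA] at hsl
  linarith [hsl]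

lemma irl1_descent_lemma {f : E → ℝ} {Lf : ℝ} (hLf : 0 ≤ Lf) (hd : Differentiable ℝ f)
    (hlip : ∀ a b, ‖gradient f a - gradient f b‖ ≤ Lf * ‖a - b‖) (a b : E) :
    f b ≤ f a + ⟪gradient f a, b - a⟫ + Lf / 2 * ‖b - a‖ ^ 2 := by
  set d := b - a with hdd
  have hgc : Continuous (fun x => gradient f x) := by
    have hL : LipschitzWith (Real.toNNReal Lf) (fun x => gradient f x) := by
      apply LipschitzWith.of_dist_le_mul
      intro x y
      rw [dist_eq_norm, dist_eq_norm]
      simpa [Real.coe_toNNReal Lf hLf] using hlip x y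
    exact hL.continuous
  have hgcont : Continuous (fun t : ℝ => a + t • d) := by continuity
  have hψc : Continuous (fun t : ℝ => ⟪gradient f (a + t • d), d⟫) :=
    (hgc.comp hgcont).inner continuous_const
  have hφ : ∀ t : ℝ, HasDerivAt (fun s : ℝ => f (a + s • d))
      ⟪gradient f (a + t • d), d⟫ t := by
    intro t
    have h1 : HasDerivAt (fun s : ℝ => a + s • d) d t := by
      simpa using ((hasDerivAt_id t).smul_const d).const_add a
    have h2 := (hd (a + t • d)).hasFDerivAt.comp_hasDerivAt t h1
    rwa [irl1_fderiv_eq_inner_gradient (hd _)] at h2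
  have hFTC : ∫ t in (0:ℝ)..1, ⟪gradient f (a + t • d), d⟫
      = f (a + (1:ℝ) • d) - f (a + (0:ℝ) • d) :=
    intervalIntegral.integral_eq_sub_of_hasDerivAt (fun t _ => hφ t)
      (hψc.intervalIntegrable 0 1)
  have hmono : ∫ t in (0:ℝ)..1, ⟪gradient f (a + t • d), d⟫
      ≤ ∫ t in (0:ℝ)..1, (⟪gradient f a, d⟫ + Lf * ‖d‖ ^ 2 * t) := by
    apply intervalIntegral.integral_mono_on zero_le_one (hψc.intervalIntegrable 0 1)
      (Continuous.intervalIntegrable (by continuity) 0 1)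
    intro t ht
    have h3 : ⟪gradient f (a + t • d), d⟫ - ⟪gradient f a, d⟫
        = ⟪gradient f (a + t • d) - gradient f a, d⟫ := (inner_sub_left _ _ _).symm
    have h4 := real_inner_le_norm (gradient f (a + t • d) - gradient f a) d
    have h5 := hlip (a + t • d) a
    have h6 : ‖a + t • d - a‖ = t * ‖d‖ := by
      rw [add_sub_cancel_left, norm_smul, Real.norm_eq_abs, abs_of_nonneg ht.1]
    rw [h6] at h5
    have h7 := mul_le_mul_of_nonneg_right h5 (norm_nonneg d)
    nlinarith [h3, h4, h7]
  have hval : ∫ t in (0:ℝ)..1, (⟪gradient f a, d⟫ + Lf * ‖d‖ ^ 2 * t)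
      = ⟪gradient f a, d⟫ + Lf * ‖d‖ ^ 2 / 2 := by
    have hint : IntervalIntegrable (fun t : ℝ => Lf * ‖d‖ ^ 2 * t) MeasureTheory.volume 0 1 :=
      (by continuity : Continuous fun t : ℝ => Lf * ‖d‖ ^ 2 * t).intervalIntegrable 0 1
    rw [intervalIntegral.integral_add intervalIntegrable_const hint,
      intervalIntegral.integral_const_mul, integral_id]
    simp
    ring
  have hb1 : a + (1:ℝ) • d = b := by rw [hdd]; module
  have hb0 : a + (0:ℝ) • d = a := by module
  rw [hb1, hb0] at hFTC
  rw [hval] at hmono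
  rw [hFTC] at hmono
  linarith

lemma irl1_rpow_tangent {p x y : ℝ} (hp0 : 0 < p) (hp1 : p ≤ 1) (hy : 0 < y) (hx : 0 ≤ x) :
    x ^ p ≤ y ^ p + p * y ^ (p - 1) * (x - y) := by
  have hyne : y ≠ 0 := hy.ne'
  have hs : -1 ≤ x / y - 1 := by
    have : 0 ≤ x / y := div_nonneg hx hy.le
    linarith
  have hb := rpow_one_add_le_one_add_mul_self hs hp0.le hp1
  have hxy : (1 + (x / y - 1)) = x / y := by ring
  rw [hxy] at hb
  rw [Real.div_rpow hx hy.le] at hb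
  have hyp : (0:ℝ) < y ^ p := Real.rpow_pos_of_pos hy p
  rw [div_le_iff₀ hyp] at hb
  rw [Real.rpow_sub hy, Real.rpow_one]
  have heq : (1 + p * (x / y - 1)) * y ^ p = y ^ p + p * (y ^ p / y) * (x - y) := by
    field_simp
  rw [heq] at hb
  exact hb

lemma irl1_l1_convex {n : ℕ} (c : Fin n → ℝ) (hc : ∀ i, 0 ≤ c i) (lam : ℝ) (hlam : 0 ≤ lam) :
    ConvexOn ℝ Set.univ (fun z : EuclideanSpace ℝ (Fin n) => lam * ∑ i, c i * |z i|) := by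
  refine ⟨convex_univ, fun x _ y _ s t hs ht hst => ?_⟩
  have hpt : ∀ i, c i * |(s • x + t • y) i| ≤ s * (c i * |x i|) + t * (c i * |y i|) := by
    intro i
    have happ : (s • x + t • y) i = s * x i + t * y i := rfl
    have habs : |s * x i + t * y i| ≤ s * |x i| + t * |y i| := by
      calc |s * x i + t * y i| ≤ |s * x i| + |t * y i| := abs_add_le _ _
        _ = s * |x i| + t * |y i| := by
            rw [abs_mul, abs_mul, abs_of_nonneg hs, abs_of_nonneg ht]
    rw [happ]
    have := mul_le_mul_of_nonneg_left habs (hc i)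
    nlinarith [this]
  simp only [smul_eq_mul]
  calc lam * ∑ i, c i * |(s • x + t • y) i|
      ≤ lam * ∑ i, (s * (c i * |x i|) + t * (c i * |y i|)) :=
        mul_le_mul_of_nonneg_left (Finset.sum_le_sum fun i _ => hpt i) hlam
    _ = s * (lam * ∑ i, c i * |x i|) + t * (lam * ∑ i, c i * |y i|) := by
        rw [Finset.sum_add_distrib, ← Finset.mul_sum, ← Finset.mul_sum]
        ring

end AuxLemmas


open RealInnerProductSpace in
lemma irl1_step {n : ℕ} (S : IRL1 n) (k : ℕ) :
    S.Feps (S.x (k + 1)) (S.eps (k + 1)) + (S.M - S.Lf / 2) * ‖S.x (k + 1) - S.x k‖ ^ 2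
      ≤ S.Feps (S.x k) (S.eps k) := by
  have hw : ∀ i, 0 ≤ wfun S.p (S.x k i) (S.eps k i) := by
    intro i
    have he := S.heps_pos k i
    have h1 : 0 < |S.x k i| + S.eps k i := by positivity
    exact (mul_pos S.hp0 (Real.rpow_pos_of_pos h1 _)).le
  -- coordinatewise concavity bound
  have hi : ∀ i, (|S.x (k + 1) i| + S.eps (k + 1) i) ^ S.p
      ≤ (|S.x k i| + S.eps k i) ^ S.p
        + wfun S.p (S.x k i) (S.eps k i) * (|S.x (k + 1) i| - |S.x k i|) := by
    intro i
    have hepos := S.heps_pos k i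
    have hepos' := S.heps_pos (k + 1) i
    have hy : 0 < |S.x k i| + S.eps k i := by positivity
    have hx : 0 ≤ |S.x (k + 1) i| + S.eps (k + 1) i := by positivity
    have htan := irl1_rpow_tangent S.hp0 S.hp1.le hy hx
    have hde : S.eps (k + 1) i ≤ S.eps k i := by
      have := S.heps_dec k i
      nlinarith [S.hmu1, hepos]
    have hwpos : 0 < S.p * (|S.x k i| + S.eps k i) ^ (S.p - 1) :=
      mul_pos S.hp0 (Real.rpow_pos_of_pos hy _)
    have hle : (|S.x (k + 1) i| + S.eps (k + 1) i) - (|S.x k i| + S.eps k i)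
        ≤ |S.x (k + 1) i| - |S.x k i| := by linarith
    have hmul := mul_le_mul_of_nonneg_left hle hwpos.le
    unfold wfun
    linarith [htan]
  have hsum : ∑ i, (|S.x (k + 1) i| + S.eps (k + 1) i) ^ S.p
      ≤ ∑ i, (|S.x k i| + S.eps k i) ^ S.p
        + ((∑ i, wfun S.p (S.x k i) (S.eps k i) * |S.x (k + 1) i|)
          - ∑ i, wfun S.p (S.x k i) (S.eps k i) * |S.x k i|) := by
    have h1 := Finset.sum_le_sum (fun i (_ : i ∈ Finset.univ) => hi i)
    simp only [mul_sub, Finset.sum_add_distrib, Finset.sum_sub_distrib] at h1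
    linarith [h1]
  have hsum' := mul_le_mul_of_nonneg_left hsum S.hlam.le
  rw [mul_add, mul_sub] at hsum'
  have hdes := irl1_descent_lemma S.hLf S.hf_diff S.hf_lip (S.x k) (S.x (k + 1))
  have hss := irl1_strong_support (S.hQ_diff k) (S.hQ_sconv k) (S.x k) (S.x (k + 1))
  rw [S.hQ_grad k] at hss
  have hGconv : ConvexOn ℝ Set.univ (fun z => S.G k z - S.M / 2 * ‖z‖ ^ 2) := by
    have h3 := (S.hQ_sconv k).add
      (irl1_l1_convex (fun i => wfun S.p (S.x k i) (S.eps k i)) hw S.lam S.hlam.le)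
    have heq : (fun z => S.G k z - S.M / 2 * ‖z‖ ^ 2)
        = fun z => (S.Q k z - S.M / 2 * ‖z‖ ^ 2)
          + S.lam * ∑ i, wfun S.p (S.x k i) (S.eps k i) * |z i| := by
      funext z
      simp only [IRL1.G]
      ring
    rw [heq]
    exact h3
  have hminG : ∀ z, S.G k (S.x (k + 1)) ≤ S.G k z := fun z => S.hmin k z
  have hqg := irl1_quad_growth hGconv hminG (S.x k)
  rw [norm_sub_rev] at hqg
  simp only [IRL1.G] at hqg
  simp only [IRL1.Feps]
  linarith [hsum', hdes, hss, hqg]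

/-- In the IRL1 setting with bounded level set, for every `k`,
`F(x⁰, ε⁰) - F(x^k, ε^k) ≥ (M - Lf/2) Σ_{t<k} ‖x^{t+1} - x^t‖²`, the series
`Σ ‖x^{t+1} - x^t‖²` converges, and `‖x^{k+1} - x^k‖ → 0`. -/
theorem stmt5 {n : ℕ} (S : IRL1 n) (hbdd : S.LevelBounded) :
    (∀ k : ℕ,
      S.Feps (S.x 0) (S.eps 0) - S.Feps (S.x k) (S.eps k) ≥
        (S.M - S.Lf / 2) * ∑ t ∈ Finset.range k, ‖S.x (t + 1) - S.x t‖ ^ 2) ∧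
    Summable (fun t : ℕ => ‖S.x (t + 1) - S.x t‖ ^ 2) ∧
    Tendsto (fun k : ℕ => ‖S.x (k + 1) - S.x k‖) atTop (nhds 0) := by
  have hC : 0 < S.M - S.Lf / 2 := by linarith [S.hM]
  have part1 : ∀ k, (S.M - S.Lf / 2) * ∑ t ∈ Finset.range k, ‖S.x (t + 1) - S.x t‖ ^ 2
      ≤ S.Feps (S.x 0) (S.eps 0) - S.Feps (S.x k) (S.eps k) := by
    intro k
    induction k with
    | zero => simp
    | succ k ih =>
      rw [Finset.sum_range_succ, mul_add]
      have := irl1_step S k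
      linarith
  have hmono : ∀ k, S.Feps (S.x k) (S.eps k) ≤ S.Feps (S.x 0) (S.eps 0) := by
    intro k
    have h1 := part1 k
    have h2 : (0:ℝ) ≤ ∑ t ∈ Finset.range k, ‖S.x (t + 1) - S.x t‖ ^ 2 :=
      Finset.sum_nonneg fun i _ => sq_nonneg _
    nlinarith [mul_nonneg hC.le h2]
  have hFle : ∀ k, S.Fobj (S.x k) ≤ S.Feps (S.x k) (S.eps k) := by
    intro k
    have hpt : ∀ i, |S.x k i| ^ S.p ≤ (|S.x k i| + S.eps k i) ^ S.p := fun i =>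
      Real.rpow_le_rpow (abs_nonneg _) (le_add_of_nonneg_right (S.heps_pos k i).le) S.hp0.le
    have hs := Finset.sum_le_sum (fun i (_ : i ∈ Finset.univ) => hpt i)
    have := mul_le_mul_of_nonneg_left hs S.hlam.le
    simp only [IRL1.Fobj, IRL1.Feps]
    linarith
  have hmem : ∀ k, S.x k ∈ {z : EuclideanSpace ℝ (Fin n) |
      S.Fobj z ≤ S.Feps (S.x 0) (S.eps 0)} := fun k =>
    le_trans (hFle k) (hmono k)
  obtain ⟨R, hR⟩ := hbdd.subset_closedBall 0
  obtain ⟨c, hcmem, hcmin⟩ := (isCompact_closedBall (0 : EuclideanSpace ℝ (Fin n)) R).exists_isMinOn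
    ⟨S.x 0, hR (hmem 0)⟩ S.hf_diff.continuous.continuousOn
  have hlow : ∀ k, S.f c ≤ S.Feps (S.x k) (S.eps k) := by
    intro k
    have h1 : S.f c ≤ S.f (S.x k) := isMinOn_iff.1 hcmin _ (hR (hmem k))
    have h2 : S.f (S.x k) ≤ S.Fobj (S.x k) := by
      have hnn : (0:ℝ) ≤ ∑ i, |S.x k i| ^ S.p :=
        Finset.sum_nonneg fun i _ => Real.rpow_nonneg (abs_nonneg _) _
      have := mul_nonneg S.hlam.le hnn
      simp only [IRL1.Fobj]
      linarith
    linarith [hFle k]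
  have hbound : ∀ k, ∑ t ∈ Finset.range k, ‖S.x (t + 1) - S.x t‖ ^ 2
      ≤ (S.Feps (S.x 0) (S.eps 0) - S.f c) / (S.M - S.Lf / 2) := by
    intro k
    rw [le_div_iff₀ hC]
    have h1 := part1 k
    have h2 := hlow k
    nlinarith [h1, h2]
  have hsummable : Summable (fun t : ℕ => ‖S.x (t + 1) - S.x t‖ ^ 2) :=
    summable_of_sum_range_le (fun t => sq_nonneg _) hbound
  have htend0 : Tendsto (fun k => ‖S.x (k + 1) - S.x k‖ ^ 2) atTop (nhds 0) :=
    hsummable.tendsto_atTop_zero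
  have htend : Tendsto (fun k : ℕ => ‖S.x (k + 1) - S.x k‖) atTop (nhds 0) := by
    have h1 : Tendsto (fun k : ℕ => Real.sqrt (‖S.x (k + 1) - S.x k‖ ^ 2)) atTop
        (nhds (Real.sqrt 0)) :=
      (Real.continuous_sqrt.continuousAt).tendsto.comp htend0
    rw [Real.sqrt_zero] at h1
    refine h1.congr fun k => ?_
    rw [Real.sqrt_sq (norm_nonneg _)]
  exact ⟨fun k => part1 k, hsummable, htend⟩
end

section
/- In the IRL1 setting with level-set boundedness, let C > 0 satisfy ‖∇Q_k(x^{k+1})‖_∞ ≤ C for all k. Fix a coordinate i. (a) If w(x_i^{k̃}, ε_i^{k̃}) > C/λ for some k̃ ∈ ℕ, then x_i^k = 0 for all k > k̃. (b) Consequently, if for every k̃ ∈ ℕ there exists k̂ > k̃ with x_i^{k̂} ≠ 0, then w(x_i^k, ε_i^k) ≤ C/λ for all k ∈ ℕ. -/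
open Filter Topology

/-- Key optimality lemma: if the next iterate is nonzero in coordinate `i`, then the
weight is bounded: `λ w(x_i^k, ε_i^k) ≤ |∇Q_k(x^{k+1})_i| ≤ C`. -/
lemma keyA {n : ℕ} (S : IRL1 n) (C : ℝ)
    (hCb : ∀ (k : ℕ) (j : Fin n), |gradient (S.Q k) (S.x (k + 1)) j| ≤ C)
    (i : Fin n) (k : ℕ) (ht : S.x (k + 1) i ≠ 0) :
    S.lam * wfun S.p (S.x k i) (S.eps k i) ≤ C := by
  set x1 := S.x (k + 1) with hx1
  set t := x1 i with htdef
  set w0 := wfun S.p (S.x k i) (S.eps k i) with hw0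
  set E := EuclideanSpace.single i (1 : ℝ) with hE
  set d := gradient (S.Q k) x1 i with hd
  -- the one-dimensional function ψ has a global minimum at 0
  set ψ := fun σ : ℝ => S.Q k (x1 + σ • E) + S.lam * (w0 * |t + σ|) with hψ
  have hmin' : ∀ σ : ℝ, ψ 0 ≤ ψ σ := by
    intro σ
    have hz : ∀ j, (x1 + σ • E) j = x1 j + σ * (if j = i then 1 else 0) := by
      intro j
      simp [hE, EuclideanSpace.single_apply, PiLp.add_apply, PiLp.smul_apply]
    have H := S.hmin k (x1 + σ • E)
    have hsum : ∑ j, wfun S.p (S.x k j) (S.eps k j) * |(x1 + σ • E) j|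
        = (∑ j, wfun S.p (S.x k j) (S.eps k j) * |x1 j|) - w0 * |t| + w0 * |t + σ| := by
      have : ∀ j ∈ Finset.univ, wfun S.p (S.x k j) (S.eps k j) * |(x1 + σ • E) j|
          = wfun S.p (S.x k j) (S.eps k j) * |x1 j|
            + (if j = i then w0 * |t + σ| - w0 * |t| else 0) := by
        intro j _
        by_cases hji : j = i
        · subst hji; rw [hz]; simp [hw0, htdef]; try ring
        · rw [hz]; simp [hji]
      rw [Finset.sum_congr rfl this, Finset.sum_add_distrib, Finset.sum_ite_eq' Finset.univ i]
      simp
      try ring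
    rw [← hx1] at H
    rw [hsum] at H
    simp only [hψ, zero_smul, add_zero]
    nlinarith [H]
  have hlocmin : IsLocalMin ψ 0 := Filter.Eventually.of_forall hmin'
  -- ψ is differentiable at 0 with derivative d + λ w0 sign t
  have hline : HasDerivAt (fun σ : ℝ => x1 + σ • E) E 0 := by
    simpa using ((hasDerivAt_id (0 : ℝ)).smul_const E).const_add x1
  have hF : HasFDerivAt (S.Q k) (InnerProductSpace.toDual ℝ _ (gradient (S.Q k) x1))
      ((fun σ : ℝ => x1 + σ • E) 0) := by
    simpa using (S.hQ_diff k x1).hasGradientAt.hasFDerivAt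
  have hφ : HasDerivAt (fun σ : ℝ => S.Q k (x1 + σ • E)) d 0 := by
    have h2 := hF.comp_hasDerivAt 0 hline
    refine HasDerivAt.congr_deriv h2 ?_
    rw [InnerProductSpace.toDual_apply_apply, hE, EuclideanSpace.inner_single_right]
    simp [hd]
  have habs : HasDerivAt (fun σ : ℝ => |t + σ|) ((SignType.sign t : ℝ)) 0 := by
    have h1 : HasDerivAt (fun σ : ℝ => t + σ) 1 0 := (hasDerivAt_id (0 : ℝ)).const_add t
    have h2 : HasDerivAt (fun y : ℝ => |y|) ((SignType.sign t : ℝ)) ((fun σ : ℝ => t + σ) 0) := by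
      simpa using hasDerivAt_abs ht
    exact (h2.comp 0 h1).congr_deriv (mul_one _)
  have hψd : HasDerivAt ψ (d + S.lam * (w0 * (SignType.sign t : ℝ))) 0 := by
    have := hφ.add (((habs.const_mul w0).const_mul S.lam))
    exact this.congr_deriv (by ring)
  have hz : d + S.lam * (w0 * (SignType.sign t : ℝ)) = 0 := hlocmin.hasDerivAt_eq_zero hψd
  have hw0pos : 0 < w0 := by
    have := S.heps_pos k i
    have hb : 0 < |S.x k i| + S.eps k i := by positivity
    exact mul_pos S.hp0 (Real.rpow_pos_of_pos hb _)
  have hsign : |(SignType.sign t : ℝ)| = 1 := by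
    rcases lt_trichotomy t 0 with h | h | h
    · simp [h]
    · exact absurd h ht
    · simp [h]
  have : S.lam * w0 = |d| := by
    have h1 : S.lam * (w0 * (SignType.sign t : ℝ)) = -d := by linarith
    have h2 : |S.lam * (w0 * (SignType.sign t : ℝ))| = |d| := by rw [h1, abs_neg]
    rw [abs_mul, abs_mul, hsign, mul_one, abs_of_pos S.hlam, abs_of_pos hw0pos] at h2
    linarith [h2]
  rw [this]
  exact hCb k i

/-- If `x_i^{k+1} = 0` then the weight does not decrease. -/
lemma keyB {n : ℕ} (S : IRL1 n) (i : Fin n) (k : ℕ) (h0 : S.x (k + 1) i = 0) :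
    wfun S.p (S.x k i) (S.eps k i) ≤ wfun S.p (S.x (k + 1) i) (S.eps (k + 1) i) := by
  have he1 : 0 < S.eps (k + 1) i := S.heps_pos (k + 1) i
  have hle : S.eps (k + 1) i ≤ |S.x k i| + S.eps k i := by
    have h1 := S.heps_dec k i
    have h2 : S.mu * S.eps k i ≤ S.eps k i := by
      nlinarith [S.heps_pos k i, S.hmu1, S.hmu0]
    have := abs_nonneg (S.x k i)
    linarith
  have := Real.rpow_le_rpow_of_nonpos he1 hle (by linarith [S.hp1] : S.p - 1 ≤ 0)
  rw [wfun, wfun, h0, abs_zero, zero_add]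
  exact mul_le_mul_of_nonneg_left this (le_of_lt S.hp0)

/-- In the IRL1 setting with bounded level set, let `C > 0` bound
`‖∇Q_k(x^{k+1})‖_∞` for all `k`, and fix a coordinate `i`.
(a) If `w(x_i^k̃, ε_i^k̃) > C/λ` for some `k̃`, then `x_i^k = 0` for all `k > k̃`.
(b) If for every `k̃` there is `k̂ > k̃` with `x_i^k̂ ≠ 0`, then
`w(x_i^k, ε_i^k) ≤ C/λ` for all `k`. -/
theorem stmt7 {n : ℕ} (S : IRL1 n) (hbdd : S.LevelBounded)
    (C : ℝ) (hC : 0 < C)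
    (hCb : ∀ (k : ℕ) (j : Fin n), |gradient (S.Q k) (S.x (k + 1)) j| ≤ C)
    (i : Fin n) :
    (∀ kt : ℕ, wfun S.p (S.x kt i) (S.eps kt i) > C / S.lam →
      ∀ k > kt, S.x k i = 0) ∧
    ((∀ kt : ℕ, ∃ kh > kt, S.x kh i ≠ 0) →
      ∀ k : ℕ, wfun S.p (S.x k i) (S.eps k i) ≤ C / S.lam) := by
  have hstep : ∀ k : ℕ, wfun S.p (S.x k i) (S.eps k i) > C / S.lam → S.x (k + 1) i = 0 := by
    intro k hk
    by_contra hne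
    have h1 := keyA S C hCb i k hne
    have h2 : wfun S.p (S.x k i) (S.eps k i) ≤ C / S.lam :=
      (le_div_iff₀ S.hlam).mpr (by linarith [h1, mul_comm S.lam (wfun S.p (S.x k i) (S.eps k i))])
    linarith
  have hA : ∀ kt : ℕ, wfun S.p (S.x kt i) (S.eps kt i) > C / S.lam →
      ∀ k > kt, S.x k i = 0 := by
    intro kt hkt
    have hind : ∀ m : ℕ, S.x (kt + 1 + m) i = 0 ∧
        wfun S.p (S.x (kt + 1 + m) i) (S.eps (kt + 1 + m) i) > C / S.lam := by
      intro m
      induction m with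
      | zero =>
        have h0 : S.x (kt + 1) i = 0 := hstep kt hkt
        refine ⟨by simpa using h0, ?_⟩
        have := keyB S i kt h0
        simp only [Nat.add_zero]
        linarith
      | succ m ih =>
        obtain ⟨ih0, ihw⟩ := ih
        have h0 : S.x (kt + 1 + m + 1) i = 0 := hstep (kt + 1 + m) ihw
        have hw := keyB S i (kt + 1 + m) h0
        have heq : kt + 1 + (m + 1) = kt + 1 + m + 1 := by omega
        rw [heq]
        exact ⟨h0, by linarith⟩
    intro k hk
    obtain ⟨m, rfl⟩ : ∃ m, k = kt + 1 + m := ⟨k - kt - 1, by omega⟩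
    exact (hind m).1
  refine ⟨hA, ?_⟩
  intro h k
  by_contra hcon
  push_neg at hcon
  obtain ⟨kh, hkh, hne⟩ := h k
  exact hne (hA k hcon kh hkh)
end

section
/- In the IRL1 setting with level-set boundedness, let C > 0 satisfy ‖∇Q_k(x^{k+1})‖_∞ ≤ C for all k, and let I* be the eventual support of the iterates. Then every cluster point x* of the sequence {x^k} satisfies {i : x_i* ≠ 0} = I*, and |x_i*| ≥ (C/(pλ))^{1/(p−1)} for every i ∈ I*. -/
open Filter Topology

open InnerProductSpace in
lemma lam_wfun_le {n : ℕ} (S : IRL1 n) (C : ℝ)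
    (hCb : ∀ (k : ℕ) (j : Fin n), |gradient (S.Q k) (S.x (k + 1)) j| ≤ C)
    (k : ℕ) (i : Fin n) (h : S.x (k + 1) i ≠ 0) :
    S.lam * wfun S.p (S.x k i) (S.eps k i) ≤ C := by
  classical
  set a : EuclideanSpace ℝ (Fin n) := S.x (k + 1) with ha
  set w : Fin n → ℝ := fun j => wfun S.p (S.x k j) (S.eps k j) with hw
  set g : ℝ := gradient (S.Q k) a i with hg
  set ei : EuclideanSpace ℝ (Fin n) := EuclideanSpace.single i (1 : ℝ) with hei
  set line : ℝ → EuclideanSpace ℝ (Fin n) := fun t => a + t • ei with hline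
  have hline0 : line 0 = a := by simp [hline]
  have hlinei : ∀ t : ℝ, line t i = a i + t := by
    intro t
    simp [hline, hei, EuclideanSpace.single_apply]
  have hlinej : ∀ (t : ℝ) (j : Fin n), j ≠ i → line t j = a j := by
    intro t j hj
    simp [hline, hei, EuclideanSpace.single_apply, hj]
  -- derivative of the line
  have hlineDeriv : HasDerivAt line ei 0 := by
    have := ((hasDerivAt_id (0 : ℝ)).smul_const ei).const_add a
    simpa [hline] using this
  -- derivative of smooth part
  have hQd : HasDerivAt (fun t => S.Q k (line t)) g 0 := by
    have hF : HasFDerivAt (S.Q k)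
        (toDual ℝ (EuclideanSpace ℝ (Fin n)) (gradient (S.Q k) a)) (line 0) := by
      rw [hline0]
      exact ((S.hQ_diff k) a).hasGradientAt.hasFDerivAt
    have hcomp := hF.comp_hasDerivAt (0 : ℝ) hlineDeriv
    have hval : toDual ℝ (EuclideanSpace ℝ (Fin n)) (gradient (S.Q k) a) ei = g := by
      rw [toDual_apply_apply, hei, hg, EuclideanSpace.inner_single_right]
      simp
    rw [hval] at hcomp
    exact hcomp
  -- derivative of |a i + t|
  have hai : a i ≠ 0 := h
  set s : ℝ := if 0 < a i then 1 else -1 with hs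
  have habs : HasDerivAt (fun t : ℝ => |a i + t|) s 0 := by
    rcases lt_or_gt_of_ne hai with hneg | hpos
    · have hU : {t : ℝ | a i + t < 0} ∈ 𝓝 (0 : ℝ) := by
        apply IsOpen.mem_nhds
        · exact isOpen_lt (by continuity) continuous_const
        · simpa using hneg
      have hev : (fun t : ℝ => |a i + t|) =ᶠ[𝓝 (0 : ℝ)] fun t => -(a i + t) := by
        filter_upwards [hU] with t ht
        exact abs_of_neg ht
      have hd : HasDerivAt (fun t : ℝ => -(a i + t)) (-1 : ℝ) 0 := by
        exact ((hasDerivAt_id (0 : ℝ)).const_add (a i)).neg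
      have := hd.congr_of_eventuallyEq hev
      have hsval : s = -1 := by rw [hs, if_neg (not_lt.mpr hneg.le)]
      rwa [hsval]
    · have hU : {t : ℝ | 0 < a i + t} ∈ 𝓝 (0 : ℝ) := by
        apply IsOpen.mem_nhds
        · exact isOpen_lt continuous_const (by continuity)
        · simpa using hpos
      have hev : (fun t : ℝ => |a i + t|) =ᶠ[𝓝 (0 : ℝ)] fun t => a i + t := by
        filter_upwards [hU] with t ht
        exact abs_of_pos ht
      have hd : HasDerivAt (fun t : ℝ => a i + t) (1 : ℝ) 0 := by
        simpa using (hasDerivAt_id (0 : ℝ)).const_add (a i)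
      have := hd.congr_of_eventuallyEq hev
      have hsval : s = 1 := by rw [hs, if_pos hpos]
      rwa [hsval]
  -- sum rewrite
  have hsum : ∀ t : ℝ, (∑ j, w j * |line t j|)
      = w i * |a i + t| + ∑ j ∈ Finset.univ.erase i, w j * |a j| := by
    intro t
    rw [← Finset.add_sum_erase _ (fun j => w j * |line t j|) (Finset.mem_univ i), hlinei]
    congr 1
    exact Finset.sum_congr rfl fun j hj => by rw [hlinej t j (Finset.mem_erase.1 hj).1]
  -- derivative of full objective along the line
  have hψ : HasDerivAt (fun t => S.Q k (line t) + S.lam * ∑ j, w j * |line t j|)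
      (g + S.lam * (w i * s)) 0 := by
    have h3 : HasDerivAt
        (fun t : ℝ => w i * |a i + t| + ∑ j ∈ Finset.univ.erase i, w j * |a j|)
        (w i * s) 0 := by
      simpa using (habs.const_mul (w i)).add_const (∑ j ∈ Finset.univ.erase i, w j * |a j|)
    have h4 : HasDerivAt (fun t : ℝ => ∑ j, w j * |line t j|) (w i * s) 0 :=
      h3.congr_of_eventuallyEq (Filter.Eventually.of_forall fun t => hsum t)
    exact hQd.add (h4.const_mul S.lam)
  -- local min
  have hmin0 : IsLocalMin (fun t => S.Q k (line t) + S.lam * ∑ j, w j * |line t j|) 0 := by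
    apply Filter.Eventually.of_forall
    intro t
    have H := S.hmin k (line t)
    rw [← ha] at H
    simp only [hline0, hw]
    exact H
  have hd0 : g + S.lam * (w i * s) = 0 := by
    have hz := hmin0.deriv_eq_zero
    rwa [hψ.deriv] at hz
  have hwpos : 0 < w i := by
    rw [hw]
    exact mul_pos S.hp0 (Real.rpow_pos_of_pos
      (add_pos_of_nonneg_of_pos (abs_nonneg _) (S.heps_pos k i)) _)
  have hs1 : |s| = 1 := by rw [hs]; split_ifs <;> simp
  have hgabs : |g| = S.lam * w i := by
    have hgeq : g = -(S.lam * (w i * s)) := by linarith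
    rw [hgeq, abs_neg, abs_mul, abs_mul, hs1, mul_one,
        abs_of_pos S.hlam, abs_of_pos hwpos]
  calc S.lam * w i = |g| := hgabs.symm
    _ ≤ C := by rw [hg, ha]; exact hCb k i

lemma coord_lb {n : ℕ} (S : IRL1 n) (C : ℝ) (hC : 0 < C)
    (hCb : ∀ (k : ℕ) (j : Fin n), |gradient (S.Q k) (S.x (k + 1)) j| ≤ C)
    (k : ℕ) (i : Fin n) (h : S.x (k + 1) i ≠ 0) :
    (C / (S.p * S.lam)) ^ (1 / (S.p - 1)) ≤ |S.x k i| + S.eps k i := by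
  have h1 := lam_wfun_le S C hCb k i h
  set b : ℝ := |S.x k i| + S.eps k i with hb
  have hbpos : 0 < b := add_pos_of_nonneg_of_pos (abs_nonneg _) (S.heps_pos k i)
  have h2 : b ^ (S.p - 1) ≤ C / (S.p * S.lam) := by
    rw [le_div_iff₀ (mul_pos S.hp0 S.hlam)]
    unfold wfun at h1
    nlinarith [Real.rpow_pos_of_pos hbpos (S.p - 1)]
  have hexp : (1 : ℝ) / (S.p - 1) ≤ 0 := by
    have : S.p - 1 < 0 := by linarith [S.hp1]
    exact (one_div_neg.mpr this).le
  have h3 := Real.rpow_le_rpow_of_nonpos (Real.rpow_pos_of_pos hbpos (S.p - 1)) h2 hexp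
  have hne : S.p - 1 ≠ 0 := by
    have : S.p - 1 < 0 := by linarith [S.hp1]
    exact this.ne
  rwa [← Real.rpow_mul hbpos.le, mul_one_div_cancel hne, Real.rpow_one] at h3

lemma eps_le {n : ℕ} (S : IRL1 n) (k : ℕ) (i : Fin n) :
    S.eps k i ≤ S.mu ^ k * S.eps 0 i := by
  induction k with
  | zero => simp
  | succ k ih =>
    calc S.eps (k + 1) i ≤ S.mu * S.eps k i := S.heps_dec k i
      _ ≤ S.mu * (S.mu ^ k * S.eps 0 i) := by
          exact mul_le_mul_of_nonneg_left ih S.hmu0.le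
      _ = S.mu ^ (k + 1) * S.eps 0 i := by ring


/-- In the IRL1 setting with bounded level set, let `C > 0` bound
`‖∇Q_k(x^{k+1})‖_∞` for all `k`, and let `I*` be the eventual support of the
iterates. Then every cluster point `x*` of `{x^k}` satisfies
`{i : x*_i ≠ 0} = I*` and `|x*_i| ≥ (C/(pλ))^(1/(p-1))` for every `i ∈ I*`. -/
theorem stmt10 {n : ℕ} (S : IRL1 n) (hbdd : S.LevelBounded)
    (C : ℝ) (hC : 0 < C)
    (hCb : ∀ (k : ℕ) (j : Fin n), |gradient (S.Q k) (S.x (k + 1)) j| ≤ C)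
    (Istar : Set (Fin n))
    (hI : ∃ K : ℕ, ∀ k > K, {i : Fin n | S.x k i ≠ 0} = Istar)
    (xstar : EuclideanSpace ℝ (Fin n))
    (hcluster : ∃ φ : ℕ → ℕ, StrictMono φ ∧
      Tendsto (fun k => S.x (φ k)) atTop (nhds xstar)) :
    {i : Fin n | xstar i ≠ 0} = Istar ∧
    ∀ i ∈ Istar, (C / (S.p * S.lam)) ^ (1 / (S.p - 1)) ≤ |xstar i| := by
  obtain ⟨K, hK⟩ := hI
  obtain ⟨φ, hφ, hlim⟩ := hcluster
  set c : ℝ := (C / (S.p * S.lam)) ^ (1 / (S.p - 1)) with hc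
  have hcpos : 0 < c :=
    Real.rpow_pos_of_pos (div_pos hC (mul_pos S.hp0 S.hlam)) _
  -- coordinate convergence
  have hcoord : ∀ i : Fin n, Tendsto (fun m => S.x (φ m) i) atTop (𝓝 (xstar i)) := by
    intro i
    exact ((EuclideanSpace.proj i).continuous.tendsto xstar).comp hlim
  -- eps convergence along subsequence
  have hepslim : ∀ i : Fin n, Tendsto (fun m => S.eps (φ m) i) atTop (𝓝 0) := by
    intro i
    apply squeeze_zero (fun m => (S.heps_pos _ i).le)
      (g := fun m => S.mu ^ m * S.eps 0 i)
    · intro m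
      calc S.eps (φ m) i ≤ S.mu ^ (φ m) * S.eps 0 i := eps_le S (φ m) i
        _ ≤ S.mu ^ m * S.eps 0 i := by
            exact mul_le_mul_of_nonneg_right
              (pow_le_pow_of_le_one S.hmu0.le S.hmu1.le hφ.le_apply)
              (S.heps_pos 0 i).le
    · simpa using
        (tendsto_pow_atTop_nhds_zero_of_lt_one S.hmu0.le S.hmu1).mul_const (S.eps 0 i)
  -- lower bound for coordinates in Istar
  have hmem : ∀ i ∈ Istar, c ≤ |xstar i| := by
    intro i hi
    have hglb : ∀ m ≥ K, c - S.eps (φ m) i ≤ |S.x (φ m) i| := by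
      intro m hm
      have hφm : φ m + 1 > K :=
        lt_of_le_of_lt (le_trans hm hφ.le_apply) (Nat.lt_succ_self _)
      have hx : S.x (φ m + 1) i ≠ 0 := by
        have hset := hK (φ m + 1) hφm
        exact (Set.ext_iff.mp hset i).mpr hi
      have := coord_lb S C hC hCb (φ m) i hx
      rw [← hc] at this
      linarith
    have h1 : Tendsto (fun m => c - S.eps (φ m) i) atTop (𝓝 c) := by
      simpa using tendsto_const_nhds.sub (hepslim i)
    have h2 : Tendsto (fun m => |S.x (φ m) i|) atTop (𝓝 |xstar i|) :=
      (continuous_abs.tendsto _).comp (hcoord i)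
    exact le_of_tendsto_of_tendsto h1 h2 (eventually_atTop.2 ⟨K, hglb⟩)
  -- coordinates outside Istar vanish
  have hzero : ∀ i ∉ Istar, xstar i = 0 := by
    intro i hi
    have hev : ∀ᶠ m in atTop, S.x (φ m) i = 0 := by
      rw [eventually_atTop]
      refine ⟨K + 1, fun m hm => ?_⟩
      have hφm : φ m > K := lt_of_lt_of_le (Nat.lt_succ_self K) (le_trans hm hφ.le_apply)
      have hset := hK (φ m) hφm
      by_contra hne
      exact hi ((Set.ext_iff.mp hset i).mp hne)
    exact tendsto_nhds_unique ((hcoord i).congr' (hev.mono fun m hm => hm))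
      tendsto_const_nhds
  constructor
  · ext i
    simp only [Set.mem_setOf_eq]
    constructor
    · intro hne
      by_contra hi
      exact hne (hzero i hi)
    · intro hi
      exact abs_pos.mp (lt_of_lt_of_le hcpos (hmem i hi))
  · exact hmem
end
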